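/- Let (V,g) be a pseudo-Euclidean vector space with dim V ≥ 3 and let h ⊊ co(V) be a proper Lie subalgebra. Then the set P := {ξ♯ : ξ ∈ V* and T^ξ belongs to the first prolongation of h} is a totally isotropic linear subspace of V; in particular g(ξ♯, η♯) = 0 whenever T^ξ and T^η belong to the first prolongation of h. -/

import Mathlib

/-- The conformal Killing endomorphism `T^ξ_X` associated to the 1-form `ξ = g(s,·)`
(with `ξ♯ = s`): `Z ↦ ξ(X) Z + ξ(Z) X − g(X,Z) ξ♯`. -/
noncomputable def Txi {V : Type*} [AddCommGroup V] [Module ℝ V]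
    (g : LinearMap.BilinForm ℝ V) (s X : V) : Module.End ℝ V :=
  g s X • (LinearMap.id : V →ₗ[ℝ] V) + (g s).smulRight X - (g X).smulRight s

/-- `A` belongs to the conformal linear Lie algebra `co(V) = ℝ·id ⊕ so(V)`. -/
def IsConf {V : Type*} [AddCommGroup V] [Module ℝ V]
    (g : LinearMap.BilinForm ℝ V) (A : Module.End ℝ V) : Prop :=
  ∃ c : ℝ, ∀ X Y : V, g (A X) Y + g X (A Y) = 2 * c * g X Y

attribute [local instance 100] LieRing.ofAssociativeRing

section Aux

variable {V : Type*} [AddCommGroup V] [Module ℝ V] (g : LinearMap.BilinForm ℝ V)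

lemma Txi_apply (s X Z : V) : Txi g s X Z = g s X • Z + g s Z • X - g X Z • s := by
  simp [Txi]

lemma Txi_add (s t X : V) : Txi g (s + t) X = Txi g s X + Txi g t X := by
  ext Z; simp [Txi_apply]; module

lemma Txi_smul (a : ℝ) (s X : V) : Txi g (a • s) X = a • Txi g s X := by
  ext Z; simp [Txi_apply]; module

lemma Txi_zero (X : V) : Txi g 0 X = 0 := by
  ext Z; simp [Txi_apply]

lemma Txi_bracket (hsymm : g.IsSymm) (s t X Y : V) :
    ⁅Txi g s X, Txi g t Y⁆ =
      Txi g t (Txi g s X Y) - Txi g (g s X • t + g t X • s - g s t • X) Y := by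
  have hs : ∀ a b : V, g a b = g b a := fun a b => (hsymm.eq a b).symm ▸ rfl
  ext Z
  simp only [Ring.lie_def, LinearMap.sub_apply, Module.End.mul_apply, Txi_apply,
    map_add, map_sub, map_smul, LinearMap.add_apply, LinearMap.smul_apply, smul_eq_mul]
  match_scalars
  any_goals ring
  · linear_combination ((g X) Y) * hs t s
  · linear_combination ((g Y) Z) * hs X t
  · linear_combination ((g X) Z) * hs t s
  · linear_combination ((g s) Z) * hs Y X - ((g X) Z) * hs Y s

lemma Txi_symm_sum (hsymm : g.IsSymm) (u X : V) :
    Txi g u X + Txi g X u = (2 * g u X) • (LinearMap.id : V →ₗ[ℝ] V) := by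
  have hs : ∀ a b : V, g a b = g b a := fun a b => (hsymm.eq a b).symm ▸ rfl
  ext Z
  simp only [Txi_apply, LinearMap.add_apply, LinearMap.smul_apply, LinearMap.id_apply]
  rw [hs X u, hs X Z]
  module

end Aux

section Expand

variable {V : Type*} [AddCommGroup V] [Module ℝ V] [FiniteDimensional ℝ V]
  (g : LinearMap.BilinForm ℝ V) (hnd : g.Nondegenerate)

lemma expand1 {ι : Type*} [Fintype ι] [DecidableEq ι] (b : Module.Basis ι ℝ V) (W : V) :
    ∑ i, g W (b i) • (g.dualBasis hnd b i) = W := by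
  conv_rhs => rw [← (g.dualBasis hnd b).sum_repr W]
  simp [LinearMap.BilinForm.dualBasis_repr_apply]

lemma expand2 (hsymm : g.IsSymm) {ι : Type*} [Fintype ι] [DecidableEq ι]
    (b : Module.Basis ι ℝ V) (W : V) :
    ∑ i, g W (g.dualBasis hnd b i) • b i = W := by
  have := expand1 g hnd (g.dualBasis hnd b) W
  rwa [LinearMap.BilinForm.dualBasis_dualBasis (B := g) hnd hsymm b] at this

/-- A skew endomorphism is a combination of the `S(u,X) = Txi u X - g u X • id`. -/
lemma skew_eq_sum (hsymm : g.IsSymm) (B : Module.End ℝ V)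
    (hskew : ∀ X Y : V, g (B X) Y = - g X (B Y)) :
    B = (2:ℝ)⁻¹ • ∑ i, (Txi g ((Module.finBasis ℝ V) i)
        (B (g.dualBasis hnd (Module.finBasis ℝ V) i)) -
      g ((Module.finBasis ℝ V) i) (B (g.dualBasis hnd (Module.finBasis ℝ V) i)) •
        (LinearMap.id : V →ₗ[ℝ] V)) := by
  have hs : ∀ a b : V, g a b = g b a := fun a b => (hsymm.eq a b).symm ▸ rfl
  set b := Module.finBasis ℝ V
  set d := g.dualBasis hnd b with hd
  ext Z
  simp only [LinearMap.smul_apply, LinearMap.sum_apply, LinearMap.sub_apply, Txi_apply,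
    LinearMap.id_apply]
  have e1 : ∑ i, g (b i) Z • B (d i) = B Z := by
    have := expand1 g hnd b Z
    calc ∑ i, g (b i) Z • B (d i) = B (∑ i, g Z (b i) • d i) := by
          rw [map_sum]; congr 1; ext i; rw [map_smul, hs (b i) Z]
      _ = B Z := by rw [expand1 g hnd b Z]
  have e2 : ∑ i, g (B (d i)) Z • b i = - B Z := by
    have hterm : ∀ i, g (B (d i)) Z • b i = -(g (B Z) (d i) • b i) := by
      intro i
      rw [hskew (d i) Z, hs (d i) (B Z), neg_smul]
    calc ∑ i, g (B (d i)) Z • b i = ∑ i, -(g (B Z) (d i) • b i) :=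
          Finset.sum_congr rfl (fun i _ => hterm i)
      _ = -(∑ i, g (B Z) (d i) • b i) := by rw [← Finset.sum_neg_distrib]
      _ = - B Z := by rw [expand2 g hnd hsymm b (B Z)]
  have : ∑ i, (g (b i) (B (d i)) • Z + g (b i) Z • B (d i) - g (B (d i)) Z • b i
        - g (b i) (B (d i)) • Z)
      = ∑ i, (g (b i) Z • B (d i)) - ∑ i, (g (B (d i)) Z • b i) := by
    rw [← Finset.sum_sub_distrib]; congr 1; ext i; abel
  rw [this, e1, e2]
  match_scalars
  norm_num

end Expand

/-- For a proper Lie subalgebra `h ⊊ co(V)` of a pseudo-Euclidean space of dimension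
≥ 3, the set `P = {ξ♯ : T^ξ ∈ h^(1)}` is a totally isotropic linear subspace of `V`;
in particular `g(ξ♯,η♯) = 0` whenever `T^ξ, T^η` lie in the first prolongation of `h`. -/
theorem prolongation_sharps_totally_isotropic
    {V : Type*} [AddCommGroup V] [Module ℝ V] [FiniteDimensional ℝ V]
    (g : LinearMap.BilinForm ℝ V) (hsymm : g.IsSymm) (hnd : g.Nondegenerate)
    (hdim : 3 ≤ Module.finrank ℝ V)
    (h : LieSubalgebra ℝ (Module.End ℝ V))
    (hco : ∀ A ∈ h, IsConf g A)
    (hproper : ∃ A : Module.End ℝ V, IsConf g A ∧ A ∉ h) :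
    (∃ P : Submodule ℝ V, (P : Set V) = {t : V | ∀ X : V, Txi g t X ∈ h}) ∧
      ∀ s t : V, (∀ X : V, Txi g s X ∈ h) → (∀ X : V, Txi g t X ∈ h) → g s t = 0 := by
  constructor
  · exact ⟨{ carrier := {t : V | ∀ X : V, Txi g t X ∈ h}
             add_mem' := fun {a b} ha hb X => by
               rw [Txi_add]; exact h.add_mem (ha X) (hb X)
             zero_mem' := fun X => by rw [Txi_zero]; exact h.zero_mem
             smul_mem' := fun a t ht X => by
               rw [Txi_smul]; exact h.smul_mem a (ht X) }, rfl⟩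
  · intro s t hsP htP
    by_contra hst
    -- Step A: every `Txi g u Y` lies in `h`.
    have key : ∀ X Y : V, g s t • Txi g X Y ∈ h := by
      intro X Y
      have hbr : ⁅Txi g s X, Txi g t Y⁆ ∈ h := h.lie_mem (hsP X) (htP Y)
      have hb := Txi_bracket g hsymm s t X Y
      have hmem : Txi g (g s X • t + g t X • s - g s t • X) Y ∈ h := by
        have : Txi g (g s X • t + g t X • s - g s t • X) Y
            = Txi g t (Txi g s X Y) - ⁅Txi g s X, Txi g t Y⁆ := by
          rw [hb]; abel
        rw [this]
        exact h.sub_mem (htP _) hbr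
      have hexp : Txi g (g s X • t + g t X • s - g s t • X) Y
          = g s X • Txi g t Y + g t X • Txi g s Y - g s t • Txi g X Y := by
        rw [sub_eq_add_neg, ← neg_smul, Txi_add, Txi_add, Txi_smul, Txi_smul, Txi_smul]
        rw [neg_smul]; abel
      have : g s t • Txi g X Y
          = g s X • Txi g t Y + g t X • Txi g s Y
            - Txi g (g s X • t + g t X • s - g s t • X) Y := by
        rw [hexp]; abel
      rw [this]
      exact h.sub_mem (h.add_mem (h.smul_mem _ (htP Y)) (h.smul_mem _ (hsP Y))) hmem
    have hall : ∀ u Y : V, Txi g u Y ∈ h := by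
      intro u Y
      have := h.smul_mem (g s t)⁻¹ (key u Y)
      rwa [smul_smul, inv_mul_cancel₀ hst, one_smul] at this
    -- Step B: `id ∈ h`.
    have hnt : Nontrivial V := by
      have : 0 < Module.finrank ℝ V := by omega
      exact Module.nontrivial_of_finrank_pos this
    obtain ⟨v, hv⟩ := exists_ne (0 : V)
    have hw : ∃ w : V, g v w ≠ 0 := by
      by_contra hc
      push_neg at hc
      exact hv (hnd.1 v hc)
    obtain ⟨w, hw⟩ := hw
    have hidmem : (LinearMap.id : V →ₗ[ℝ] V) ∈ h := by
      have h2 : (2 * g v w) • (LinearMap.id : V →ₗ[ℝ] V) ∈ h := by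
        rw [← Txi_symm_sum g hsymm v w]
        exact h.add_mem (hall v w) (hall w v)
      have := h.smul_mem (2 * g v w)⁻¹ h2
      rwa [smul_smul, inv_mul_cancel₀ (mul_ne_zero two_ne_zero hw), one_smul] at this
    -- Step C: every conformal endomorphism lies in `h`, contradicting `hproper`.
    obtain ⟨A, ⟨c, hA⟩, hAn⟩ := hproper
    set B : Module.End ℝ V := A - c • LinearMap.id with hB
    have hskew : ∀ X Y : V, g (B X) Y = - g X (B Y) := by
      intro X Y
      have := hA X Y
      simp only [hB, LinearMap.sub_apply, LinearMap.smul_apply, LinearMap.id_apply,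
        map_sub, map_smul, LinearMap.sub_apply, LinearMap.smul_apply, smul_eq_mul]
      linarith
    have hBmem : B ∈ h := by
      rw [skew_eq_sum g hnd hsymm B hskew, ← LieSubalgebra.mem_toSubmodule]
      refine Submodule.smul_mem _ _ (Submodule.sum_mem _ fun i _ => ?_)
      refine Submodule.sub_mem _ ?_ (Submodule.smul_mem _ _ ?_)
      · rw [LieSubalgebra.mem_toSubmodule]; exact hall _ _
      · rw [LieSubalgebra.mem_toSubmodule]; exact hidmem
    have hAmem : A ∈ h := by
      have : A = B + c • LinearMap.id := by rw [hB]; abel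
      rw [this]
      exact h.add_mem hBmem (h.smul_mem c hidmem)
    exact hAn hAmem
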